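/- Let N : ℝ² → ℝ be a functional with N(z) ≥ 0 for all z, N(z) > 0 for z ≠ (0,0), and N(t•z) = t·N(z) for all t ≥ 0 and z ∈ ℝ² (positive homogeneity). Define Q(z) = N(z)²/N(z⊛z) for z ≠ (0,0). Let p, q be real numbers with p ≠ 0 and q > 0. If z = (x, y) ∈ ℝ² with y ≠ 0 satisfies the equation Q(z)•(z⊛z) + p•z + q•(1,0) = (0,0), then x = -p/(2·Q(z)), y² = q/Q(z) - p²/(4·Q(z)²), and (x + q/p)² + y² = (q/p)², i.e. z lies on the Euclidean circle of radius |q/p| centered at (-q/p, 0). -/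

import Mathlib

/-- Circular vector-valued vector product on ℝ². -/
def circMul (z w : ℝ × ℝ) : ℝ × ℝ :=
  (z.1 * w.1 - z.2 * w.2, z.1 * w.2 + w.1 * z.2)

/-- `Q` associated with a phs-functional `N`. -/
noncomputable def Qfun (N : ℝ × ℝ → ℝ) (z : ℝ × ℝ) : ℝ := (N z) ^ 2 / N (circMul z z)

theorem stmt_4 (N : ℝ × ℝ → ℝ)
    (hN0 : ∀ z, 0 ≤ N z) (hNpos : ∀ z : ℝ × ℝ, z ≠ (0, 0) → 0 < N z)
    (hNhom : ∀ (t : ℝ), 0 ≤ t → ∀ z : ℝ × ℝ, N (t • z) = t * N z)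
    (p q : ℝ) (hp : p ≠ 0) (hq : q > 0) (x y : ℝ) (hy : y ≠ 0)
    (hz : Qfun N (x, y) • circMul (x, y) (x, y) + p • ((x : ℝ), (y : ℝ))
        + q • ((1 : ℝ), (0 : ℝ)) = (0, 0)) :
    x = -p / (2 * Qfun N (x, y)) ∧
      y ^ 2 = q / Qfun N (x, y) - p ^ 2 / (4 * (Qfun N (x, y)) ^ 2) ∧
      (x + q / p) ^ 2 + y ^ 2 = (q / p) ^ 2 := by
  set Q := Qfun N (x, y) with hQ
  have h1 : Q * (x * x - y * y) + p * x + q * 1 = 0 := congrArg Prod.fst hz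
  have h2 : Q * (x * y + x * y) + p * y + q * 0 = 0 := congrArg Prod.snd hz
  have hkey : 2 * Q * x + p = 0 := by
    have : y * (2 * Q * x + p) = 0 := by ring_nf; ring_nf at h2; linarith
    rcases mul_eq_zero.mp this with h | h
    · exact absurd h hy
    · exact h
  have hQ0 : Q ≠ 0 := by
    intro h; rw [h] at hkey; simp at hkey; exact hp hkey
  have hx : x = -p / (2 * Q) := by field_simp; linarith
  refine ⟨hx, ?_, ?_⟩
  · field_simp
    linear_combination (-4*Q)*h1 + (2*Q*x+p)*hkey
  · field_simp
    linear_combination ((x^2+y^2)*(2*Q*x+p) + 2*x*q - 4*Q*x*y^2)*hkey - 4*Q*x^2*h1
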